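/- Define g : ℝ → ℝ by g(λ) := (1/2)·(Σᵢ 1/qᵢ)·λ² + (Σᵢ (c₀ᵢ/qᵢ + aᵢ))·λ. If λ̄ is a global minimizer of g over the set {λ ∈ ℝ : λ ≤ λmax}, then with ȳᵢ := φ(λ̄)ᵢ, s̄ := Σᵢ (φ(λ̄)ᵢ − aᵢ), and μ̄s := λmax − λ̄, the tuple (ȳ, s̄, λ̄, μ̄s) satisfies: qᵢ·ȳᵢ + c₀ᵢ + λ̄ = 0 for all i; λmax − λ̄ − μ̄s = 0; Σᵢ ȳᵢ − Σᵢ aᵢ = s̄; μ̄s ≥ 0; s̄ ≥ 0; and μ̄s·s̄ = 0. -/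

import Mathlib

/-- If `lamBar` is a global minimizer of `g` over `{lam | lam ≤ lamMax}`, then the indicated
tuple satisfies the KKT conditions of the modified primal problem. -/
theorem stmt_7 (N : ℕ) (hN : 0 < N) (q c₀ a : Fin N → ℝ) (hq : ∀ i, 0 < q i)
    (lamMax : ℝ) (φ : ℝ → Fin N → ℝ)
    (hφ : ∀ lam i, φ lam i = -(lam + c₀ i) / q i)
    (g : ℝ → ℝ)
    (hg : ∀ lam, g lam = (1 / 2) * (∑ i, 1 / q i) * lam ^ 2 + (∑ i, (c₀ i / q i + a i)) * lam)
    (lamBar : ℝ)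
    (hmem : lamBar ≤ lamMax)
    (hmin : ∀ lam : ℝ, lam ≤ lamMax → g lamBar ≤ g lam)
    (yBar : Fin N → ℝ) (sBar muS : ℝ)
    (hy : ∀ i, yBar i = φ lamBar i)
    (hs : sBar = ∑ i, (φ lamBar i - a i))
    (hmu : muS = lamMax - lamBar) :
    (∀ i, q i * yBar i + c₀ i + lamBar = 0) ∧
      lamMax - lamBar - muS = 0 ∧
      (∑ i, yBar i) - (∑ i, a i) = sBar ∧
      0 ≤ muS ∧ 0 ≤ sBar ∧ muS * sBar = 0 := by
  haveI : Nonempty (Fin N) := ⟨⟨0, hN⟩⟩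
  set A := ∑ i, 1 / q i with hA
  set B := ∑ i, (c₀ i / q i + a i) with hB
  have hApos : 0 < A := Finset.sum_pos (fun i _ => one_div_pos.mpr (hq i)) Finset.univ_nonempty
  set D := A * lamBar + B with hD
  have hsD : sBar = -D := by
    have h1 : ∀ i : Fin N, φ lamBar i - a i
        = -(lamBar * (1 / q i) + (c₀ i / q i + a i)) := by
      intro i
      rw [hφ]
      field_simp [(hq i).ne']
      ring
    rw [hs]
    calc ∑ i, (φ lamBar i - a i)
        = ∑ i, -(lamBar * (1 / q i) + (c₀ i / q i + a i)) :=
          Finset.sum_congr rfl fun i _ => h1 i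
      _ = -(lamBar * A + B) := by
          rw [Finset.sum_neg_distrib, Finset.sum_add_distrib, Finset.mul_sum]
      _ = -D := by rw [hD]; ring
  have hdiff : ∀ lam, lam ≤ lamMax →
      0 ≤ (lam - lamBar) * (A * (lam + lamBar) / 2 + B) := by
    intro lam hlam
    have h := hmin lam hlam
    have heq : g lam - g lamBar = (lam - lamBar) * (A * (lam + lamBar) / 2 + B) := by
      rw [hg, hg]; ring
    linarith
  have hDle : D ≤ 0 := by
    by_contra h
    push_neg at h
    have ht : 0 < D / A := div_pos h hApos
    have h2 := hdiff (lamBar - D / A) (by linarith)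
    have hAD : A * (D / A) = D := mul_div_cancel₀ _ hApos.ne'
    nlinarith [h2, hAD, ht, h]
  have hcomp : muS * sBar = 0 := by
    rcases eq_or_lt_of_le hmem with heq | hlt
    · rw [hmu, ← heq]; ring_nf
    · have hD0 : D = 0 := by
        by_contra h
        have hDlt : D < 0 := lt_of_le_of_ne hDle h
        set t := min (lamMax - lamBar) (-D / A) with htdef
        have ht0 : 0 < t := lt_min (by linarith) (div_pos (by linarith) hApos)
        have htle : lamBar + t ≤ lamMax := by
          have := min_le_left (lamMax - lamBar) (-D / A)
          linarith
        have h2 := hdiff (lamBar + t) htle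
        have h3 : 0 ≤ D + A * t / 2 := by nlinarith
        have ht2 : t ≤ -D / A := min_le_right _ _
        have h4 : A * t ≤ -D := by
          calc A * t ≤ A * (-D / A) := by nlinarith
            _ = -D := mul_div_cancel₀ _ hApos.ne'
        linarith
      rw [hsD, hD0]; ring
  refine ⟨?_, by rw [hmu]; ring, ?_, by rw [hmu]; linarith, by rw [hsD]; linarith, hcomp⟩
  · intro i
    rw [hy, hφ]
    field_simp [(hq i).ne']
    ring
  · rw [hs, Finset.sum_sub_distrib]
    simp [hy]
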